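/- Let S = B₁ × ⋯ × B_m × Z₁ × ⋯ × Zₙ with m, n ≥ 1, where each Bᵢ is the Boolean semiring, and each Zⱼ is a finite commutative antinegative semiring with Z(Zⱼ) closed under addition, |Zⱼ| ≥ 3, and |Zⱼ \ Z(Zⱼ)| = 1. Then dim(Γ₁(S)) = |S| + m − 2^{m+n} = |Z(S)| − 2^{m+n} + m + 1. -/

import Mathlib

/-- `x` is a zero-divisor of the commutative semiring `S`. -/
def IsZD {S : Type*} [CommSemiring S] (x : S) : Prop :=
  ∃ y : S, y ≠ 0 ∧ x * y = 0

/-- The total graph of a commutative semiring: distinct `x, y` are adjacent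
iff `x + y` is a zero-divisor. -/
def totalGraph (S : Type*) [CommSemiring S] : SimpleGraph S where
  Adj x y := x ≠ y ∧ IsZD (x + y)
  symm := by
    constructor
    intro x y h
    exact ⟨h.1.symm, by rw [add_comm]; exact h.2⟩
  loopless := by constructor; intro x h; exact h.1 rfl

/-- The induced subgraph of the total graph on the set of zero-divisors. -/
def gamma1 (S : Type*) [CommSemiring S] : SimpleGraph {x : S // IsZD x} :=
  SimpleGraph.comap Subtype.val (totalGraph S)

/-- A resolving set: distinct vertices have distinct distance vectors to `W`. -/
def IsResolving {V : Type*} (G : SimpleGraph V) (W : Set V) : Prop :=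
  ∀ x y : V, (∀ w ∈ W, G.dist x w = G.dist y w) → x = y

/-- The metric dimension: the least cardinality of a resolving set. -/
noncomputable def metricDim {V : Type*} (G : SimpleGraph V) : ℕ :=
  sInf {k | ∃ W : Set V, W.Finite ∧ W.ncard = k ∧ IsResolving G W}

/-- The Boolean semiring `𝔹 = {0,1}` with `1 + 1 = 1`. -/
inductive BB : Type
  | zero : BB
  | one : BB
deriving DecidableEq

instance : Zero BB := ⟨.zero⟩
instance : One BB := ⟨.one⟩
instance : Add BB := ⟨fun x y => match x, y with | .zero, y => y | .one, _ => .one⟩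
instance : Mul BB := ⟨fun x y => match x, y with | .zero, _ => .zero | .one, y => y⟩
instance : Fintype BB := ⟨{.zero, .one}, by intro x; cases x <;> decide⟩

instance : CommSemiring BB where
  add_assoc := by decide
  zero_add := by decide
  add_zero := by decide
  add_comm := by decide
  mul_assoc := by decide
  one_mul := by decide
  mul_one := by decide
  left_distrib := by decide
  right_distrib := by decide
  zero_mul := by decide
  mul_zero := by decide
  mul_comm := by decide
  nsmul := nsmulRec
  npow := npowRec

section ZZbasic

lemma zz_not_isZD_one {S : Type*} [CommSemiring S] : ¬ IsZD (1 : S) := by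
  rintro ⟨y, hy, h⟩; rw [one_mul] at h; exact hy h

lemma zz_zd_ne_one {S : Type*} [CommSemiring S] {x : S} (h : IsZD x) : x ≠ 1 := by
  rintro rfl; exact zz_not_isZD_one h

lemma zz_bb_cases : ∀ x : BB, x = 0 ∨ x = 1 := by decide

lemma zz_bb_add_one : ∀ x y : BB, x + y = 1 ↔ x = 1 ∨ y = 1 := by decide

lemma zz_bb_one_ne_zero : (1 : BB) ≠ 0 := by decide

end ZZbasic

open Classical in
/-- the pattern of an element: which coordinates are equal to 1 -/
noncomputable def zzPat {m n : ℕ} {B : Fin m → Type*} [∀ i, CommSemiring (B i)]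
    {Z : Fin n → Type*} [∀ j, CommSemiring (Z j)]
    (x : (∀ i, B i) × (∀ j, Z j)) : Fin m ⊕ Fin n → Bool :=
  Sum.elim (fun i => decide (x.1 i = 1)) (fun j => decide (x.2 j = 1))

structure zzCtx (m n : ℕ) (B : Fin m → Type*) (Z : Fin n → Type*)
    [∀ i, CommSemiring (B i)] [∀ j, CommSemiring (Z j)] : Type _ where
  hm : 1 ≤ m
  hn : 1 ≤ n
  e : ∀ i, B i ≃+* BB
  antiZ : ∀ j, ∀ a b : Z j, a + b = 0 → a = 0 ∧ b = 0
  closedZ : ∀ j, ∀ a b : Z j, IsZD a → IsZD b → IsZD (a + b)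
  htwoZ : ∀ j, ∃ a b : Z j, a ≠ b ∧ a ≠ 1 ∧ b ≠ 1
  hzdZ : ∀ j, ∀ x : Z j, x ≠ 1 → IsZD x
  hntZ : ∀ j, (1 : Z j) ≠ 0

namespace zzCtx

variable {m n : ℕ} {B : Fin m → Type*} {Z : Fin n → Type*}
    [∀ i, CommSemiring (B i)] [∀ j, CommSemiring (Z j)]
    (C : zzCtx m n B Z)

include C

lemma Bzero_or_one (i : Fin m) (b : B i) : b = 0 ∨ b = 1 := by
  rcases zz_bb_cases (C.e i b) with h | h
  · left; have := (C.e i).injective (h.trans (map_zero (C.e i)).symm); exact this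
  · right; have := (C.e i).injective (h.trans (map_one (C.e i)).symm); exact this

lemma Bone_ne_zero (i : Fin m) : (1 : B i) ≠ 0 := by
  intro h
  apply zz_bb_one_ne_zero
  have := congrArg (C.e i) h
  rwa [map_one, map_zero] at this

lemma Badd_eq_one (i : Fin m) (b b' : B i) : b + b' = 1 ↔ b = 1 ∨ b' = 1 := by
  constructor
  · intro h
    have := congrArg (C.e i) h
    rw [map_add, map_one] at this
    rcases (zz_bb_add_one _ _).mp this with h' | h'
    · exact Or.inl ((C.e i).injective (h'.trans (map_one (C.e i)).symm))
    · exact Or.inr ((C.e i).injective (h'.trans (map_one (C.e i)).symm))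
  · rintro (rfl | rfl)
    · rcases C.Bzero_or_one i b' with rfl | rfl
      · rw [add_zero]
      · apply (C.e i).injective
        rw [map_add, map_one]; decide
    · rcases C.Bzero_or_one i b with rfl | rfl
      · rw [zero_add]
      · apply (C.e i).injective
        rw [map_add, map_one]; decide

lemma Zone_add (j : Fin n) (x : Z j) : 1 + x = 1 := by
  by_contra h
  obtain ⟨y, hy, hxy⟩ := C.hzdZ j _ h
  rw [add_mul, one_mul] at hxy
  exact hy (C.antiZ j _ _ hxy).1

lemma Zadd_eq_one (j : Fin n) (x y : Z j) : x + y = 1 ↔ x = 1 ∨ y = 1 := by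
  constructor
  · intro h
    by_contra hc
    push_neg at hc
    exact zz_zd_ne_one (C.closedZ j x y (C.hzdZ j x hc.1) (C.hzdZ j y hc.2)) h
  · rintro (rfl | rfl)
    · exact C.Zone_add j y
    · rw [add_comm]; exact C.Zone_add j x


lemma pat_inl (x : (∀ i, B i) × (∀ j, Z j)) (i : Fin m) :
    zzPat x (Sum.inl i) = true ↔ x.1 i = 1 := by
  simp [zzPat]

lemma pat_inr (x : (∀ i, B i) × (∀ j, Z j)) (j : Fin n) :
    zzPat x (Sum.inr j) = true ↔ x.2 j = 1 := by
  simp [zzPat]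

lemma eq_one_iff (x : (∀ i, B i) × (∀ j, Z j)) :
    x = 1 ↔ ∀ k, zzPat x k = true := by
  constructor
  · rintro rfl k
    rcases k with i | j
    · rw [C.pat_inl]; rfl
    · rw [C.pat_inr]; rfl
  · intro h
    refine Prod.ext (funext fun i => ?_) (funext fun j => ?_)
    · exact (C.pat_inl x i).mp (h (Sum.inl i))
    · exact (C.pat_inr x j).mp (h (Sum.inr j))

lemma isZD_iff (x : (∀ i, B i) × (∀ j, Z j)) : IsZD x ↔ x ≠ 1 := by
  constructor
  · exact fun h => zz_zd_ne_one h
  · intro h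
    have : ¬ ∀ k, zzPat x k = true := fun hk => h ((C.eq_one_iff x).mpr hk)
    push_neg at this
    obtain ⟨k, hk⟩ := this
    replace hk : zzPat x k = false := Bool.eq_false_iff.mpr hk
    rcases k with i | j
    · -- BB coordinate: x.1 i ≠ 1, so = 0
      have h1 : x.1 i ≠ 1 := fun h' => by simp [zzPat, h'] at hk
      have h0 : x.1 i = 0 := (C.Bzero_or_one i _).resolve_right h1
      refine ⟨(Pi.single i 1, 0), ?_, ?_⟩
      · intro hc
        have := congrFun (congrArg Prod.fst hc) i
        simp only [Prod.fst_zero, Pi.single_eq_same, Pi.zero_apply] at this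
        exact C.Bone_ne_zero i this
      · refine Prod.ext (funext fun i' => ?_) ?_
        · by_cases hi : i' = i
          · subst hi
            show x.1 i' * Pi.single i' (1 : B i') i' = 0
            rw [Pi.single_eq_same, h0, zero_mul]
          · show x.1 i' * Pi.single i (1 : B i) i' = 0
            rw [Pi.single_eq_of_ne hi, mul_zero]
        · show x.2 * 0 = 0
          rw [mul_zero]
    · have h1 : x.2 j ≠ 1 := fun h' => by simp [zzPat, h'] at hk
      obtain ⟨w, hw, hmul⟩ := C.hzdZ j _ h1
      refine ⟨(0, Pi.single j w), ?_, ?_⟩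
      · intro hc
        have := congrFun (congrArg Prod.snd hc) j
        simp only [Prod.snd_zero, Pi.single_eq_same, Pi.zero_apply] at this
        exact hw this
      · refine Prod.ext ?_ (funext fun j' => ?_)
        · show x.1 * 0 = 0
          rw [mul_zero]
        · by_cases hj : j' = j
          · subst hj
            show x.2 j' * Pi.single j' w j' = 0
            rwa [Pi.single_eq_same]
          · show x.2 j' * Pi.single j w j' = 0
            rw [Pi.single_eq_of_ne hj, mul_zero]

lemma add_eq_one_iff (x y : (∀ i, B i) × (∀ j, Z j)) :
    x + y = 1 ↔ ∀ k, zzPat x k = true ∨ zzPat y k = true := by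
  constructor
  · intro h k
    rcases k with i | j
    · have := congrFun (congrArg Prod.fst h) i
      rcases (C.Badd_eq_one i _ _).mp this with h' | h'
      · exact Or.inl ((C.pat_inl x i).mpr h')
      · exact Or.inr ((C.pat_inl y i).mpr h')
    · have := congrFun (congrArg Prod.snd h) j
      rcases (C.Zadd_eq_one j _ _).mp this with h' | h'
      · exact Or.inl ((C.pat_inr x j).mpr h')
      · exact Or.inr ((C.pat_inr y j).mpr h')
  · intro h
    refine Prod.ext (funext fun i => ?_) (funext fun j => ?_)
    · show x.1 i + y.1 i = 1
      refine (C.Badd_eq_one i _ _).mpr ?_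
      rcases h (Sum.inl i) with h' | h'
      · exact Or.inl ((C.pat_inl x i).mp h')
      · exact Or.inr ((C.pat_inl y i).mp h')
    · show x.2 j + y.2 j = 1
      refine (C.Zadd_eq_one j _ _).mpr ?_
      rcases h (Sum.inr j) with h' | h'
      · exact Or.inl ((C.pat_inr x j).mp h')
      · exact Or.inr ((C.pat_inr y j).mp h')

/-- pattern equality plus all-Z-coordinates-one determines the element -/
lemma eq_of_pat_eq (x y : (∀ i, B i) × (∀ j, Z j))
    (hp : zzPat x = zzPat y) (hJ : ∀ j, zzPat x (Sum.inr j) = true) : x = y := by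
  refine Prod.ext (funext fun i => ?_) (funext fun j => ?_)
  · rcases Bool.eq_false_or_eq_true (zzPat x (Sum.inl i)) with hb | hb
    · have hb' : zzPat y (Sum.inl i) = true := by rw [← hp]; exact hb
      rw [(C.pat_inl x i).mp hb, (C.pat_inl y i).mp hb']
    · have hb' : zzPat y (Sum.inl i) = false := by rw [← hp]; exact hb
      have h1 : x.1 i ≠ 1 := fun h' => by
        rw [(C.pat_inl x i).mpr h'] at hb; exact Bool.noConfusion hb
      have h2 : y.1 i ≠ 1 := fun h' => by
        rw [(C.pat_inl y i).mpr h'] at hb'; exact Bool.noConfusion hb'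
      rw [(C.Bzero_or_one i _).resolve_right h1, (C.Bzero_or_one i _).resolve_right h2]
  · have h1 := (C.pat_inr x j).mp (hJ j)
    have h2 := (C.pat_inr y j).mp (by rw [← hp]; exact hJ j)
    rw [h1, h2]

end zzCtx

namespace zzCtx

variable {m n : ℕ} {B : Fin m → Type*} {Z : Fin n → Type*}
    [∀ i, CommSemiring (B i)] [∀ j, CommSemiring (Z j)]
    (C : zzCtx m n B Z)

include C in
lemma one_ne_zero_S : (1 : (∀ i, B i) × (∀ j, Z j)) ≠ 0 := by
  intro h
  exact C.hntZ ⟨0, C.hn⟩ (congrFun (congrArg Prod.snd h) ⟨0, C.hn⟩)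

include C in
lemma isZD_zero : IsZD (0 : (∀ i, B i) × (∀ j, Z j)) :=
  ⟨1, C.one_ne_zero_S, zero_mul 1⟩

noncomputable def v0 : {x : (∀ i, B i) × (∀ j, Z j) // IsZD x} := ⟨0, C.isZD_zero⟩

include C

lemma adj_iff (a b : {x : (∀ i, B i) × (∀ j, Z j) // IsZD x}) :
    (gamma1 ((∀ i, B i) × (∀ j, Z j))).Adj a b ↔ a ≠ b ∧ a.val + b.val ≠ 1 := by
  constructor
  · rintro ⟨h1, h2⟩
    exact ⟨fun h => h1 (congrArg Subtype.val h), zz_zd_ne_one h2⟩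
  · rintro ⟨h1, h2⟩
    exact ⟨fun h => h1 (Subtype.ext h), (C.isZD_iff _).mpr h2⟩

lemma adj_v0 (b : {x : (∀ i, B i) × (∀ j, Z j) // IsZD x}) (h : b ≠ C.v0) :
    (gamma1 ((∀ i, B i) × (∀ j, Z j))).Adj C.v0 b := by
  refine (C.adj_iff _ _).mpr ⟨Ne.symm h, ?_⟩
  show (0 : (∀ i, B i) × (∀ j, Z j)) + b.val ≠ 1
  rw [zero_add]
  exact zz_zd_ne_one b.2

lemma reach (a b : {x : (∀ i, B i) × (∀ j, Z j) // IsZD x}) :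
    (gamma1 ((∀ i, B i) × (∀ j, Z j))).Reachable a b := by
  have h1 : ∀ c : {x : (∀ i, B i) × (∀ j, Z j) // IsZD x},
      (gamma1 ((∀ i, B i) × (∀ j, Z j))).Reachable c C.v0 := by
    intro c
    by_cases hc : c = C.v0
    · exact hc ▸ SimpleGraph.Reachable.refl _
    · exact ((C.adj_v0 c hc).symm).reachable
  exact (h1 a).trans (h1 b).symm

lemma dist_ne_zero (a b : {x : (∀ i, B i) × (∀ j, Z j) // IsZD x}) (h : a ≠ b) :
    (gamma1 ((∀ i, B i) × (∀ j, Z j))).dist a b ≠ 0 := by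
  intro hd
  rcases SimpleGraph.dist_eq_zero_iff_eq_or_not_reachable.mp hd with h' | h'
  · exact h h'
  · exact h' (C.reach a b)

lemma dist_one (a b : {x : (∀ i, B i) × (∀ j, Z j) // IsZD x}) (hne : a ≠ b)
    (h : a.val + b.val ≠ 1) :
    (gamma1 ((∀ i, B i) × (∀ j, Z j))).dist a b = 1 :=
  SimpleGraph.dist_eq_one_iff_adj.mpr ((C.adj_iff a b).mpr ⟨hne, h⟩)

lemma dist_two (a b : {x : (∀ i, B i) × (∀ j, Z j) // IsZD x}) (hne : a ≠ b)
    (h : a.val + b.val = 1) :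
    (gamma1 ((∀ i, B i) × (∀ j, Z j))).dist a b = 2 := by
  have ha : a ≠ C.v0 := by
    rintro rfl
    apply zz_zd_ne_one b.2
    rw [show (C.v0).val = 0 from rfl, zero_add] at h
    exact h
  have hb : b ≠ C.v0 := by
    rintro rfl
    apply zz_zd_ne_one a.2
    rw [show (C.v0).val = 0 from rfl, add_zero] at h
    exact h
  have hle : (gamma1 ((∀ i, B i) × (∀ j, Z j))).dist a b ≤ 2 := by
    have := SimpleGraph.dist_le (SimpleGraph.Walk.cons ((C.adj_v0 a ha).symm)
      (SimpleGraph.Walk.cons (C.adj_v0 b hb) SimpleGraph.Walk.nil))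
    simpa using this
  have h0 := C.dist_ne_zero a b hne
  have h1' : (gamma1 ((∀ i, B i) × (∀ j, Z j))).dist a b ≠ 1 := by
    intro hd
    have := SimpleGraph.dist_eq_one_iff_adj.mp hd
    rw [C.adj_iff] at this
    exact this.2 h
  omega

lemma dist_sep (x y w : {x : (∀ i, B i) × (∀ j, Z j) // IsZD x})
    (hwx : w ≠ x) (hwy : w ≠ y)
    (h1 : w.val + x.val = 1) (h2 : w.val + y.val ≠ 1) :
    (gamma1 ((∀ i, B i) × (∀ j, Z j))).dist x w ≠ (gamma1 ((∀ i, B i) × (∀ j, Z j))).dist y w := by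
  have d1 : (gamma1 ((∀ i, B i) × (∀ j, Z j))).dist x w = 2 := by
    rw [SimpleGraph.dist_comm]
    exact C.dist_two w x hwx h1
  have d2 : (gamma1 ((∀ i, B i) × (∀ j, Z j))).dist y w = 1 := by
    rw [SimpleGraph.dist_comm]
    exact C.dist_one w y hwy h2
  omega

lemma dist_twin (a b w : {x : (∀ i, B i) × (∀ j, Z j) // IsZD x})
    (hpat : zzPat a.val = zzPat b.val) (hwa : w ≠ a) (hwb : w ≠ b) :
    (gamma1 ((∀ i, B i) × (∀ j, Z j))).dist a w = (gamma1 ((∀ i, B i) × (∀ j, Z j))).dist b w := by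
  by_cases hp : w.val + a.val = 1
  · have hp' : w.val + b.val = 1 := by
      rw [C.add_eq_one_iff] at hp ⊢
      intro k
      rcases hp k with h | h
      · exact Or.inl h
      · exact Or.inr (by rw [← hpat]; exact h)
    rw [SimpleGraph.dist_comm, C.dist_two w a hwa hp,
      SimpleGraph.dist_comm, C.dist_two w b hwb hp']
  · have hp' : w.val + b.val ≠ 1 := by
      intro hc
      apply hp
      rw [C.add_eq_one_iff] at hc ⊢
      intro k
      rcases hc k with h | h
      · exact Or.inl h
      · exact Or.inr (by rw [hpat]; exact h)
    rw [SimpleGraph.dist_comm, C.dist_one w a hwa hp,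
      SimpleGraph.dist_comm, C.dist_one w b hwb hp']

end zzCtx

section ZZpatterns

variable {m n : ℕ}

def zzTop : Fin m ⊕ Fin n → Bool := fun _ => true
def zzBot : Fin m ⊕ Fin n → Bool := fun _ => false
def zzSig (i : Fin m) : Fin m ⊕ Fin n → Bool := fun k => decide (k ≠ Sum.inl i)
def zzE (i : Fin m) : Fin m ⊕ Fin n → Bool := fun k => decide (k = Sum.inl i)
def zzSigJ (j : Fin n) : Fin m ⊕ Fin n → Bool := fun k => decide (k ≠ Sum.inr j)

lemma zzSig_ne_top (i : Fin m) : zzSig (n := n) i ≠ zzTop := by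
  intro h
  have := congrFun h (Sum.inl i)
  simp [zzSig, zzTop] at this

lemma zzE_ne_top (hn : 1 ≤ n) (i : Fin m) : zzE (n := n) i ≠ zzTop := by
  intro h
  have := congrFun h (Sum.inr ⟨0, hn⟩)
  simp [zzE, zzTop] at this

lemma zzBot_ne_top (hn : 1 ≤ n) : zzBot (m := m) (n := n) ≠ zzTop := by
  intro h
  have := congrFun h (Sum.inr ⟨0, hn⟩)
  simp [zzBot, zzTop] at this

lemma zzBot_ne_E (i : Fin m) : zzBot (n := n) ≠ zzE i := by
  intro h
  have := congrFun h (Sum.inl i)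
  simp [zzBot, zzE] at this

lemma zzBot_ne_Sig (hn : 1 ≤ n) (i : Fin m) : zzBot (n := n) ≠ zzSig i := by
  intro h
  have := congrFun h (Sum.inr ⟨0, hn⟩)
  simp [zzBot, zzSig] at this

lemma zzBot_ne_SigJ (hm : 1 ≤ m) (j : Fin n) : zzBot (m := m) ≠ zzSigJ j := by
  intro h
  have := congrFun h (Sum.inl ⟨0, hm⟩)
  simp [zzBot, zzSigJ] at this

lemma zzSigJ_ne_top (j : Fin n) : zzSigJ (m := m) j ≠ zzTop := by
  intro h
  have := congrFun h (Sum.inr j)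
  simp [zzSigJ, zzTop] at this

lemma zzSig_inj {i i' : Fin m} (h : zzSig (n := n) i = zzSig i') : i = i' := by
  by_contra hne
  have := congrFun h (Sum.inl i)
  simp [zzSig] at this
  exact hne this

lemma zzE_inj {i i' : Fin m} (h : zzE (n := n) i = zzE i') : i = i' := by
  have := congrFun h (Sum.inl i)
  simp [zzE] at this
  exact this

lemma zzSig_ne_E (hn : 1 ≤ n) (i i' : Fin m) : zzSig (n := n) i ≠ zzE i' := by
  intro h
  have := congrFun h (Sum.inr ⟨0, hn⟩)
  simp [zzSig, zzE] at this

lemma zzE_ne_bot (i : Fin m) : zzE (n := n) i ≠ zzBot := fun h => zzBot_ne_E i h.symm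

end ZZpatterns

section ZZvrep

variable {m n : ℕ} {B : Fin m → Type*} {Z : Fin n → Type*}
    [∀ i, CommSemiring (B i)] [∀ j, CommSemiring (Z j)]

/-- canonical representative of a pattern class -/
def zzVrep (u : Fin m ⊕ Fin n → Bool) : (∀ i, B i) × (∀ j, Z j) :=
  (fun i => if u (Sum.inl i) = true then 1 else 0,
   fun j => if u (Sum.inr j) = true then 1 else 0)

/-- the vertex with `1` everywhere except coordinate `j`, which is `a` -/
def zzWZ (j : Fin n) (a : Z j) : (∀ i, B i) × (∀ j, Z j) :=
  ((1 : ∀ i, B i), Function.update (1 : ∀ j', Z j') j a)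

namespace zzCtx

variable (C : zzCtx m n B Z)

include C

lemma pat_vrep (u : Fin m ⊕ Fin n → Bool) : zzPat (zzVrep (B := B) (Z := Z) u) = u := by
  funext k
  rcases k with i | j
  · rcases Bool.eq_false_or_eq_true (u (Sum.inl i)) with hb | hb
    · rw [hb]
      refine (C.pat_inl _ i).mpr ?_
      show (if u (Sum.inl i) = true then (1 : B i) else 0) = 1
      rw [hb]; simp
    · rw [hb]
      refine Bool.eq_false_iff.mpr fun hc => ?_
      have := (C.pat_inl (zzVrep u) i).mp hc
      rw [show ((zzVrep (B := B) (Z := Z) u).1 i) = (if u (Sum.inl i) = true then (1 : B i) else 0) from rfl, hb] at this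
      simp at this
      exact C.Bone_ne_zero i this.symm
  · rcases Bool.eq_false_or_eq_true (u (Sum.inr j)) with hb | hb
    · rw [hb]
      refine (C.pat_inr _ j).mpr ?_
      show (if u (Sum.inr j) = true then (1 : Z j) else 0) = 1
      rw [hb]; simp
    · rw [hb]
      refine Bool.eq_false_iff.mpr fun hc => ?_
      have := (C.pat_inr (zzVrep u) j).mp hc
      rw [show ((zzVrep (B := B) (Z := Z) u).2 j) = (if u (Sum.inr j) = true then (1 : Z j) else 0) from rfl, hb] at this
      simp at this
      exact C.hntZ j this.symm

lemma vrep_ne_one {u : Fin m ⊕ Fin n → Bool} (h : u ≠ zzTop) :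
    zzVrep (B := B) (Z := Z) u ≠ 1 := by
  intro hc
  apply h
  funext k
  have := (C.eq_one_iff (zzVrep u)).mp hc k
  rw [C.pat_vrep] at this
  exact this

lemma vrep_isZD {u : Fin m ⊕ Fin n → Bool} (h : u ≠ zzTop) :
    IsZD (zzVrep (B := B) (Z := Z) u) :=
  (C.isZD_iff _).mpr (C.vrep_ne_one h)

lemma pat_ne_top (x : {x : (∀ i, B i) × (∀ j, Z j) // IsZD x}) :
    zzPat x.val ≠ zzTop := by
  intro h
  apply zz_zd_ne_one x.2
  refine (C.eq_one_iff _).mpr fun k => ?_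
  rw [h]; rfl

lemma pat_wZ {j : Fin n} {a : Z j} (ha : a ≠ 1) :
    zzPat (zzWZ (B := B) j a) = zzSigJ j := by
  funext k
  rcases k with i | j'
  · simp [zzPat, zzWZ, zzSigJ]
  · by_cases hj : j' = j
    · subst hj
      simp [zzPat, zzWZ, zzSigJ, ha]
    · simp [zzPat, zzWZ, zzSigJ, hj, Function.update_of_ne hj]

lemma wZ_isZD {j : Fin n} {a : Z j} (ha : a ≠ 1) :
    IsZD (zzWZ (B := B) j a) := by
  refine (C.isZD_iff _).mpr fun h => ?_
  apply ha
  have h2 : Function.update (1 : ∀ j', Z j') j a j = (1 : ∀ j', Z j') j :=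
    congrFun (congrArg Prod.snd h) j
  rw [Function.update_self] at h2
  simpa using h2

end zzCtx

end ZZvrep

section ZZupper

variable {m n : ℕ}

/-- the patterns whose representative is removed from the resolving set -/
def zzCSig (m n : ℕ) : Finset (Fin m ⊕ Fin n → Bool) :=
  Finset.univ.filter (fun u => u ≠ zzTop ∧ ∀ i, u ≠ zzSig i)

lemma card_zzCSig : (zzCSig m n).card + (m + 1) = 2 ^ (m + n) := by
  classical
  have hEq : zzCSig m n = (insert (zzTop (m := m) (n := n)) (Finset.image (zzSig (m := m) (n := n)) Finset.univ))ᶜ := by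
    ext u
    simp only [zzCSig, Finset.mem_filter, Finset.mem_univ, true_and, Finset.mem_compl,
      Finset.mem_insert, Finset.mem_image]
    constructor
    · rintro ⟨h1, h2⟩ (h | ⟨i, h⟩)
      · exact h1 h
      · exact h2 i h.symm
    · intro h
      push_neg at h
      exact ⟨h.1, fun i hi => h.2 i hi.symm⟩
  have hcard : (insert (zzTop (m := m) (n := n)) (Finset.image (zzSig (m := m) (n := n)) Finset.univ)).card = m + 1 := by
    rw [Finset.card_insert_of_notMem (by
      simp only [Finset.mem_image]
      rintro ⟨i, -, h⟩
      exact zzSig_ne_top i h)]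
    rw [Finset.card_image_of_injective _ (fun i i' h => zzSig_inj h)]
    simp
  have htot := Finset.card_add_card_compl (insert (zzTop (m := m) (n := n)) (Finset.image (zzSig (m := m) (n := n)) Finset.univ))
  have hall : Fintype.card (Fin m ⊕ Fin n → Bool) = 2 ^ (m + n) := by
    simp [Fintype.card_fun]
  rw [hall] at htot
  rw [hcard] at htot
  rw [hEq]
  omega

variable {B : Fin m → Type*} {Z : Fin n → Type*}
    [∀ i, CommSemiring (B i)] [∀ j, CommSemiring (Z j)]

/-- the resolving set: all vertices except the canonical representative of
each class not of the form `σ i`. -/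
def zzW : Set {x : (∀ i, B i) × (∀ j, Z j) // IsZD x} :=
  {x | ¬ (zzPat x.val ∈ zzCSig m n ∧ x.val = zzVrep (zzPat x.val))}

lemma not_mem_zzW {x : {x : (∀ i, B i) × (∀ j, Z j) // IsZD x}} (h : x ∉ zzW) :
    zzPat x.val ∈ zzCSig m n ∧ x.val = zzVrep (zzPat x.val) := not_not.mp h

namespace zzCtx

variable (C : zzCtx m n B Z)

include C in
lemma sep_exists (x y : {x : (∀ i, B i) × (∀ j, Z j) // IsZD x})
    (hx : x ∉ zzW) (hy : y ∉ zzW) (hxy : x ≠ y) :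
    ∃ w ∈ zzW, (gamma1 ((∀ i, B i) × (∀ j, Z j))).dist x w ≠
      (gamma1 ((∀ i, B i) × (∀ j, Z j))).dist y w := by
  classical
  obtain ⟨hxc, hxv⟩ := not_mem_zzW hx
  obtain ⟨hyc, hyv⟩ := not_mem_zzW hy
  have hut : zzPat x.val ≠ zzPat y.val := by
    intro h
    exact hxy (Subtype.ext (hxv.trans (by rw [h, ← hyv])))
  obtain ⟨k, hk⟩ := Function.ne_iff.mp hut
  rcases k with i | j
  · -- differ at a BB coordinate: use the vertex of pattern `σ i`
    set w : {x : (∀ i, B i) × (∀ j, Z j) // IsZD x} :=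
      ⟨zzVrep (zzSig i), C.vrep_isZD (zzSig_ne_top i)⟩ with hw
    have hpatw : zzPat w.val = zzSig i := C.pat_vrep _
    have hwW : w ∈ zzW := by
      intro hc
      have := hc.1
      simp only [zzCSig, Finset.mem_filter] at this
      exact this.2.2 i hpatw
    have hperp : ∀ v : {x : (∀ i, B i) × (∀ j, Z j) // IsZD x},
        (w.val + v.val = 1 ↔ zzPat v.val (Sum.inl i) = true) := by
      intro v
      rw [C.add_eq_one_iff, hpatw]
      constructor
      · intro h
        rcases h (Sum.inl i) with h' | h'
        · simp [zzSig] at h'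
        · exact h'
      · intro h k
        by_cases hki : k = Sum.inl i
        · exact Or.inr (hki ▸ h)
        · exact Or.inl (by simp [zzSig, hki])
    have hwx : w ≠ x := fun hc => hx (hc ▸ hwW)
    have hwy : w ≠ y := fun hc => hy (hc ▸ hwW)
    rcases Bool.eq_false_or_eq_true (zzPat x.val (Sum.inl i)) with hu | hu
    · have ht : zzPat y.val (Sum.inl i) = false := by
        rcases Bool.eq_false_or_eq_true (zzPat y.val (Sum.inl i)) with h' | h'
        · exact absurd (hu.trans h'.symm) hk
        · exact h'
      exact ⟨w, hwW, C.dist_sep x y w hwx hwy ((hperp x).mpr hu)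
        (fun h => by rw [hperp y, ht] at h; exact Bool.noConfusion h)⟩
    · have ht : zzPat y.val (Sum.inl i) = true := by
        rcases Bool.eq_false_or_eq_true (zzPat y.val (Sum.inl i)) with h' | h'
        · exact h'
        · exact absurd (hu.trans h'.symm) hk
      exact ⟨w, hwW, (C.dist_sep y x w hwy hwx ((hperp y).mpr ht)
        (fun h => by rw [hperp x, hu] at h; exact Bool.noConfusion h)).symm⟩
  · -- differ at a Z coordinate: use a vertex of pattern `σJ j` inside W
    obtain ⟨a, b, hab, ha1, hb1⟩ := C.htwoZ j
    set w1 : {x : (∀ i, B i) × (∀ j, Z j) // IsZD x} := ⟨zzWZ j a, C.wZ_isZD ha1⟩ with hw1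
    set w2 : {x : (∀ i, B i) × (∀ j, Z j) // IsZD x} := ⟨zzWZ j b, C.wZ_isZD hb1⟩ with hw2
    have hw12 : w1 ≠ w2 := by
      intro h
      apply hab
      have := congrFun (congrArg (fun z => (Subtype.val z).2) h) j
      simpa [hw1, hw2, zzWZ, Function.update_self] using this
    have hpat1 : zzPat w1.val = zzSigJ j := C.pat_wZ ha1
    have hpat2 : zzPat w2.val = zzSigJ j := C.pat_wZ hb1
    have hWor : w1 ∈ zzW ∨ w2 ∈ zzW := by
      by_contra hc
      push_neg at hc
      obtain ⟨h1c, h1v⟩ := not_mem_zzW hc.1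
      obtain ⟨h2c, h2v⟩ := not_mem_zzW hc.2
      exact hw12 (Subtype.ext (by rw [h1v, h2v, hpat1, hpat2]))
    obtain ⟨w, hwW, hpatw⟩ : ∃ w ∈ zzW, zzPat w.val = zzSigJ (m := m) j := by
      rcases hWor with h | h
      · exact ⟨w1, h, hpat1⟩
      · exact ⟨w2, h, hpat2⟩
    have hperp : ∀ v : {x : (∀ i, B i) × (∀ j, Z j) // IsZD x},
        (w.val + v.val = 1 ↔ zzPat v.val (Sum.inr j) = true) := by
      intro v
      rw [C.add_eq_one_iff, hpatw]
      constructor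
      · intro h
        rcases h (Sum.inr j) with h' | h'
        · simp [zzSigJ] at h'
        · exact h'
      · intro h k
        by_cases hkj : k = Sum.inr j
        · exact Or.inr (hkj ▸ h)
        · exact Or.inl (by simp [zzSigJ, hkj])
    have hwx : w ≠ x := fun hc => hx (hc ▸ hwW)
    have hwy : w ≠ y := fun hc => hy (hc ▸ hwW)
    rcases Bool.eq_false_or_eq_true (zzPat x.val (Sum.inr j)) with hu | hu
    · have ht : zzPat y.val (Sum.inr j) = false := by
        rcases Bool.eq_false_or_eq_true (zzPat y.val (Sum.inr j)) with h' | h'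
        · exact absurd (hu.trans h'.symm) hk
        · exact h'
      exact ⟨w, hwW, C.dist_sep x y w hwx hwy ((hperp x).mpr hu)
        (fun h => by rw [hperp y, ht] at h; exact Bool.noConfusion h)⟩
    · have ht : zzPat y.val (Sum.inr j) = true := by
        rcases Bool.eq_false_or_eq_true (zzPat y.val (Sum.inr j)) with h' | h'
        · exact h'
        · exact absurd (hu.trans h'.symm) hk
      exact ⟨w, hwW, (C.dist_sep y x w hwy hwx ((hperp y).mpr ht)
        (fun h => by rw [hperp x, hu] at h; exact Bool.noConfusion h)).symm⟩

include C in
lemma resolving_W : IsResolving (gamma1 ((∀ i, B i) × (∀ j, Z j))) zzW := by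
  intro x y hfor
  by_contra hxy
  by_cases hx : x ∈ zzW
  · have := hfor x hx
    rw [SimpleGraph.dist_self] at this
    exact C.dist_ne_zero y x (Ne.symm hxy) this.symm
  · by_cases hy : y ∈ zzW
    · have := hfor y hy
      rw [SimpleGraph.dist_self] at this
      exact C.dist_ne_zero x y hxy this
    · obtain ⟨w, hw, hne⟩ := C.sep_exists x y hx hy hxy
      exact hne (hfor w hw)

end zzCtx

end ZZupper

section ZZlower

variable {m n : ℕ} {B : Fin m → Type*} {Z : Fin n → Type*}
    [∀ i, CommSemiring (B i)] [∀ j, CommSemiring (Z j)]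

namespace zzCtx

variable (C : zzCtx m n B Z)

include C

lemma twin_injOn {W : Set {x : (∀ i, B i) × (∀ j, Z j) // IsZD x}}
    (hres : IsResolving (gamma1 ((∀ i, B i) × (∀ j, Z j))) W) :
    Set.InjOn (fun x : {x : (∀ i, B i) × (∀ j, Z j) // IsZD x} => zzPat x.val) Wᶜ := by
  intro x hx y hy hp
  refine hres x y fun w hw => ?_
  exact C.dist_twin x y w hp (fun hc => hx (hc ▸ hw)) (fun hc => hy (hc ▸ hw))

lemma patw_eq_sig {i : Fin m} {w : {x : (∀ i, B i) × (∀ j, Z j) // IsZD x}}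
    (h : ∀ k, k ≠ Sum.inl i → zzPat w.val k = true) : zzPat w.val = zzSig i := by
  funext k
  by_cases hk : k = Sum.inl i
  · subst hk
    have hne := C.pat_ne_top w
    rcases Bool.eq_false_or_eq_true (zzPat w.val (Sum.inl i)) with hb | hb
    · exfalso
      apply hne
      funext k'
      by_cases hk' : k' = Sum.inl i
      · rw [hk', hb]; rfl
      · rw [h k' hk']; rfl
    · rw [hb]; simp [zzSig]
  · rw [h k hk]; simp [zzSig, hk]

lemma sig_unique {i : Fin m} {x y : {x : (∀ i, B i) × (∀ j, Z j) // IsZD x}}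
    (hx : zzPat x.val = zzSig i) (hy : zzPat y.val = zzSig i) : x = y := by
  refine Subtype.ext (C.eq_of_pat_eq _ _ (hx.trans hy.symm) fun j => ?_)
  rw [hx]; simp [zzSig]

lemma P1 {W : Set {x : (∀ i, B i) × (∀ j, Z j) // IsZD x}}
    (hres : IsResolving (gamma1 ((∀ i, B i) × (∀ j, Z j))) W)
    {u1 u2 : Fin m ⊕ Fin n → Bool} (h12 : u1 ≠ u2)
    {x1 x2 : {x : (∀ i, B i) × (∀ j, Z j) // IsZD x}}
    (hx1 : x1 ∉ W) (hp1 : zzPat x1.val = u1) (hx2 : x2 ∉ W) (hp2 : zzPat x2.val = u2) :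
    ∃ w ∈ W, ¬ ((∀ k, zzPat w.val k = true ∨ u1 k = true) ↔
      (∀ k, zzPat w.val k = true ∨ u2 k = true)) := by
  have hne : x1 ≠ x2 := fun h => h12 (hp1.symm.trans (h ▸ hp2))
  by_contra hc
  push_neg at hc
  apply hne
  refine hres x1 x2 fun w hw => ?_
  have hiff := hc w hw
  rw [← hp1, ← hp2] at hiff
  have hwx1 : w ≠ x1 := fun h => hx1 (h ▸ hw)
  have hwx2 : w ≠ x2 := fun h => hx2 (h ▸ hw)
  by_cases hperp : w.val + x1.val = 1
  · have hperp2 : w.val + x2.val = 1 := by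
      rw [C.add_eq_one_iff]
      exact hiff.mp ((C.add_eq_one_iff _ _).mp hperp)
    rw [SimpleGraph.dist_comm, C.dist_two w x1 hwx1 hperp,
      SimpleGraph.dist_comm, C.dist_two w x2 hwx2 hperp2]
  · have hperp2 : ¬ (w.val + x2.val = 1) := by
      intro h
      exact hperp ((C.add_eq_one_iff _ _).mpr (hiff.mpr ((C.add_eq_one_iff _ _).mp h)))
    rw [SimpleGraph.dist_comm, C.dist_one w x1 hwx1 hperp,
      SimpleGraph.dist_comm, C.dist_one w x2 hwx2 hperp2]

lemma L1 {W : Set {x : (∀ i, B i) × (∀ j, Z j) // IsZD x}}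
    (hres : IsResolving (gamma1 ((∀ i, B i) × (∀ j, Z j))) W) (i : Fin m)
    {x0 x1 : {x : (∀ i, B i) × (∀ j, Z j) // IsZD x}}
    (hx0 : x0 ∉ W) (hp0 : zzPat x0.val = zzBot) (hx1 : x1 ∉ W) (hp1 : zzPat x1.val = zzE i) :
    ∀ x : {x : (∀ i, B i) × (∀ j, Z j) // IsZD x}, zzPat x.val = zzSig i → x ∈ W := by
  obtain ⟨w, hw, hniff⟩ := C.P1 hres (zzBot_ne_E i) hx0 hp0 hx1 hp1
  have hnA : ¬ (∀ k, zzPat w.val k = true ∨ zzBot (m := m) (n := n) k = true) := by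
    intro hA
    apply C.pat_ne_top w
    funext k
    rcases hA k with h | h
    · rw [h]; rfl
    · exact absurd h (by simp [zzBot])
  have hB : ∀ k, zzPat w.val k = true ∨ zzE (n := n) i k = true := by
    by_contra hB
    exact hniff ⟨fun hA => absurd hA hnA, fun h => absurd h hB⟩
  have hpatw : zzPat w.val = zzSig i := by
    refine C.patw_eq_sig fun k hk => ?_
    rcases hB k with h | h
    · exact h
    · exact absurd h (by simp [zzE, hk])
  intro x hx
  exact (C.sig_unique hx hpatw) ▸ hw

lemma L2 {W : Set {x : (∀ i, B i) × (∀ j, Z j) // IsZD x}}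
    (hres : IsResolving (gamma1 ((∀ i, B i) × (∀ j, Z j))) W) {i i' : Fin m} (hii : i ≠ i')
    {x1 x2 : {x : (∀ i, B i) × (∀ j, Z j) // IsZD x}}
    (hx1 : x1 ∉ W) (hp1 : zzPat x1.val = zzE i) (hx2 : x2 ∉ W) (hp2 : zzPat x2.val = zzE i') :
    (∀ x : {x : (∀ i, B i) × (∀ j, Z j) // IsZD x}, zzPat x.val = zzSig i → x ∈ W) ∨
    (∀ x : {x : (∀ i, B i) × (∀ j, Z j) // IsZD x}, zzPat x.val = zzSig i' → x ∈ W) := by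
  obtain ⟨w, hw, hniff⟩ := C.P1 hres (fun h => hii (zzE_inj h)) hx1 hp1 hx2 hp2
  have hAB : (∀ k, zzPat w.val k = true ∨ zzE (n := n) i k = true) ∨
      (∀ k, zzPat w.val k = true ∨ zzE (n := n) i' k = true) := by
    by_cases hA : ∀ k, zzPat w.val k = true ∨ zzE (n := n) i k = true
    · exact Or.inl hA
    · right
      by_contra hB
      exact hniff ⟨fun h => absurd h hA, fun h => absurd h hB⟩
  rcases hAB with hA | hA
  · left
    have hpatw : zzPat w.val = zzSig i := by
      refine C.patw_eq_sig fun k hk => ?_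
      rcases hA k with h | h
      · exact h
      · exact absurd h (by simp [zzE, hk])
    intro x hx
    exact (C.sig_unique hx hpatw) ▸ hw
  · right
    have hpatw : zzPat w.val = zzSig i' := by
      refine C.patw_eq_sig fun k hk => ?_
      rcases hA k with h | h
      · exact h
      · exact absurd h (by simp [zzE, hk])
    intro x hx
    exact (C.sig_unique hx hpatw) ▸ hw

omit C in
lemma hmiss_aux {W : Set {x : (∀ i, B i) × (∀ j, Z j) // IsZD x}}
    {u : Fin m ⊕ Fin n → Bool}
    (hu : ¬ ∀ x : {x : (∀ i, B i) × (∀ j, Z j) // IsZD x}, zzPat x.val = u → x ∈ W) :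
    ∃ x : {x : (∀ i, B i) × (∀ j, Z j) // IsZD x}, x ∉ W ∧ zzPat x.val = u := by
  push_neg at hu
  obtain ⟨x, h1, h2⟩ := hu
  exact ⟨x, h2, h1⟩

lemma exists_full_finset [∀ j, Fintype (Z j)]
    {W : Set {x : (∀ i, B i) × (∀ j, Z j) // IsZD x}}
    (hres : IsResolving (gamma1 ((∀ i, B i) × (∀ j, Z j))) W) :
    ∃ F : Finset (Fin m ⊕ Fin n → Bool), F.card = m ∧ zzTop ∉ F ∧
      ∀ u ∈ F, ∀ x : {x : (∀ i, B i) × (∀ j, Z j) // IsZD x}, zzPat x.val = u → x ∈ W := by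
  classical
  set g : Fin m → (Fin m ⊕ Fin n → Bool) :=
    fun i => if (∀ x : {x : (∀ i, B i) × (∀ j, Z j) // IsZD x}, zzPat x.val = zzSig i → x ∈ W)
      then zzSig i else zzE i with hgdef
  have hg1 : ∀ i, (∀ x : {x : (∀ i, B i) × (∀ j, Z j) // IsZD x}, zzPat x.val = zzSig i → x ∈ W) →
      g i = zzSig i := fun i h => by simp only [hgdef]; rw [if_pos h]
  have hg2 : ∀ i, ¬ (∀ x : {x : (∀ i, B i) × (∀ j, Z j) // IsZD x}, zzPat x.val = zzSig i → x ∈ W) →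
      g i = zzE i := fun i h => by simp only [hgdef]; rw [if_neg h]
  have hg_cases : ∀ i, g i = zzSig i ∨ g i = zzE i := by
    intro i
    by_cases h : ∀ x : {x : (∀ i, B i) × (∀ j, Z j) // IsZD x}, zzPat x.val = zzSig i → x ∈ W
    · exact Or.inl (hg1 i h)
    · exact Or.inr (hg2 i h)
  have hg_ne_top : ∀ i, g i ≠ zzTop := by
    intro i
    rcases hg_cases i with h | h
    · rw [h]; exact zzSig_ne_top i
    · rw [h]; exact zzE_ne_top C.hn i
  have hg_ne_bot : ∀ i, g i ≠ zzBot := by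
    intro i
    rcases hg_cases i with h | h
    · rw [h]; exact fun hc => zzBot_ne_Sig C.hn i hc.symm
    · rw [h]; exact zzE_ne_bot i
  have hg_inj : Function.Injective g := by
    intro i i' h
    rcases hg_cases i with h1 | h1 <;> rcases hg_cases i' with h2 | h2 <;>
      rw [h1, h2] at h
    · exact zzSig_inj h
    · exact absurd h (zzSig_ne_E C.hn i i')
    · exact absurd h.symm (zzSig_ne_E C.hn i' i)
    · exact zzE_inj h
  have hg_full : ∀ i, (∀ x : {x : (∀ i, B i) × (∀ j, Z j) // IsZD x}, zzPat x.val = zzE i → x ∈ W) →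
      ∀ x : {x : (∀ i, B i) × (∀ j, Z j) // IsZD x}, zzPat x.val = g i → x ∈ W := by
    intro i hei
    by_cases h : ∀ x : {x : (∀ i, B i) × (∀ j, Z j) // IsZD x}, zzPat x.val = zzSig i → x ∈ W
    · rw [hg1 i h]; exact h
    · rw [hg2 i h]; exact hei
  by_cases hAll : ∀ i, (∀ x : {x : (∀ i, B i) × (∀ j, Z j) // IsZD x}, zzPat x.val = zzE i → x ∈ W) ∨
      (∀ x : {x : (∀ i, B i) × (∀ j, Z j) // IsZD x}, zzPat x.val = zzSig i → x ∈ W)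
  · refine ⟨Finset.image g Finset.univ, ?_, ?_, ?_⟩
    · rw [Finset.card_image_of_injective _ hg_inj]; simp
    · simp only [Finset.mem_image]
      rintro ⟨i, -, h⟩
      exact hg_ne_top i h
    · intro u hu
      simp only [Finset.mem_image] at hu
      obtain ⟨i, -, rfl⟩ := hu
      rcases hAll i with h | h
      · exact hg_full i h
      · rw [hg1 i h]; exact h
  · push_neg at hAll
    obtain ⟨t0, ht0e, ht0s⟩ := hAll
    obtain ⟨xe, hpe, hxe⟩ := ht0e
    obtain ⟨xs, hps, hxs⟩ := ht0s
    have hnFs : ¬ ∀ x : {x : (∀ i, B i) × (∀ j, Z j) // IsZD x},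
        zzPat x.val = zzSig t0 → x ∈ W := fun h => hxs (h xs hps)
    have hFullBot : ∀ x : {x : (∀ i, B i) × (∀ j, Z j) // IsZD x}, zzPat x.val = zzBot → x ∈ W := by
      by_contra hb
      obtain ⟨x0, hx0, hp0⟩ := hmiss_aux hb
      exact hnFs (C.L1 hres t0 hx0 hp0 hxe hpe)
    have hOther : ∀ i, i ≠ t0 →
        ∀ x : {x : (∀ i, B i) × (∀ j, Z j) // IsZD x}, zzPat x.val = g i → x ∈ W := by
      intro i hi
      by_cases h : ∀ x : {x : (∀ i, B i) × (∀ j, Z j) // IsZD x}, zzPat x.val = zzSig i → x ∈ W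
      · rw [hg1 i h]; exact h
      · rw [hg2 i h]
        by_contra he
        obtain ⟨x1, hx1, hp1⟩ := hmiss_aux he
        rcases C.L2 hres hi hx1 hp1 hxe hpe with hf | hf
        · exact h hf
        · exact hnFs hf
    refine ⟨insert zzBot ((Finset.univ.erase t0).image g), ?_, ?_, ?_⟩
    · rw [Finset.card_insert_of_notMem (by
        simp only [Finset.mem_image]
        rintro ⟨i, -, h⟩
        exact hg_ne_bot i h)]
      rw [Finset.card_image_of_injective _ hg_inj, Finset.card_erase_of_mem (Finset.mem_univ t0)]
      simp only [Finset.card_univ, Fintype.card_fin]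
      have := C.hm
      omega
    · simp only [Finset.mem_insert, Finset.mem_image]
      rintro (h | ⟨i, -, h⟩)
      · exact zzBot_ne_top C.hn h.symm
      · exact hg_ne_top i h
    · intro u hu
      simp only [Finset.mem_insert, Finset.mem_image, Finset.mem_erase] at hu
      rcases hu with rfl | ⟨i, ⟨hi, -⟩, rfl⟩
      · exact hFullBot
      · exact hOther i hi

lemma lower_bound [∀ j, Fintype (Z j)]
    {W : Set {x : (∀ i, B i) × (∀ j, Z j) // IsZD x}}
    (hres : IsResolving (gamma1 ((∀ i, B i) × (∀ j, Z j))) W) :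
    Nat.card {x : (∀ i, B i) × (∀ j, Z j) // IsZD x} + m + 1 ≤ W.ncard + 2 ^ (m + n) := by
  classical
  haveI : ∀ i, Finite (B i) := fun i => Finite.of_equiv BB (C.e i).toEquiv.symm
  haveI : Finite ((∀ i, B i) × (∀ j, Z j)) := inferInstance
  obtain ⟨F, hFcard, hFtop, hFfull⟩ := C.exists_full_finset hres
  have hinj := C.twin_injOn hres
  have himg : (fun x : {x : (∀ i, B i) × (∀ j, Z j) // IsZD x} => zzPat x.val) '' Wᶜ ⊆
      ↑((insert zzTop F)ᶜ) := by
    rintro p ⟨x, hx, rfl⟩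
    simp only [Finset.coe_compl, Set.mem_compl_iff, Finset.mem_coe, Finset.mem_insert]
    rintro (h | h)
    · exact C.pat_ne_top x h
    · exact hx (hFfull _ h x rfl)
  have h1 : Wᶜ.ncard = ((fun x : {x : (∀ i, B i) × (∀ j, Z j) // IsZD x} => zzPat x.val) '' Wᶜ).ncard :=
    (Set.ncard_image_of_injOn hinj).symm
  have h2 : ((fun x : {x : (∀ i, B i) × (∀ j, Z j) // IsZD x} => zzPat x.val) '' Wᶜ).ncard ≤
      (↑((insert zzTop F)ᶜ) : Set (Fin m ⊕ Fin n → Bool)).ncard :=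
    Set.ncard_le_ncard himg (Finset.finite_toSet _)
  rw [Set.ncard_coe_finset] at h2
  have h3 : (insert zzTop F).card + ((insert zzTop F)ᶜ).card = 2 ^ (m + n) := by
    rw [Finset.card_add_card_compl]
    simp [Fintype.card_fun]
  have h4 : (insert zzTop F).card = m + 1 := by
    rw [Finset.card_insert_of_notMem hFtop, hFcard]
  have h5 : W.ncard + Wᶜ.ncard = Nat.card {x : (∀ i, B i) × (∀ j, Z j) // IsZD x} :=
    Set.ncard_add_ncard_compl W (Set.toFinite _) (Set.toFinite _)
  omega

end zzCtx

end ZZlower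

section ZZfinal

variable {m n : ℕ} {B : Fin m → Type*} {Z : Fin n → Type*}
    [∀ i, CommSemiring (B i)] [∀ j, CommSemiring (Z j)] [∀ j, Fintype (Z j)]

namespace zzCtx

variable (C : zzCtx m n B Z)

include C

lemma ncard_Wc : (zzW (B := B) (Z := Z))ᶜ.ncard = (zzCSig m n).card := by
  classical
  haveI : ∀ i, Finite (B i) := fun i => Finite.of_equiv BB (C.e i).toEquiv.symm
  have hWc : (zzW (B := B) (Z := Z))ᶜ =
      {x : {x : (∀ i, B i) × (∀ j, Z j) // IsZD x} |
        zzPat x.val ∈ zzCSig m n ∧ x.val = zzVrep (zzPat x.val)} := by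
    ext x
    simp only [zzW, Set.mem_compl_iff, Set.mem_setOf_eq, not_not]
  have hinj : Set.InjOn (fun x : {x : (∀ i, B i) × (∀ j, Z j) // IsZD x} => zzPat x.val)
      ((zzW (B := B) (Z := Z))ᶜ) := by
    intro x hx y hy hp
    rw [hWc] at hx hy
    have hp' : zzPat x.val = zzPat y.val := hp
    exact Subtype.ext (hx.2.trans (by rw [hp', ← hy.2]))
  have himg : (fun x : {x : (∀ i, B i) × (∀ j, Z j) // IsZD x} => zzPat x.val) ''
      ((zzW (B := B) (Z := Z))ᶜ) = ↑(zzCSig m n) := by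
    ext p
    constructor
    · rintro ⟨x, hx, rfl⟩
      rw [hWc] at hx
      exact hx.1
    · intro hp
      have hptop : p ≠ zzTop := by
        have := hp
        simp only [Finset.mem_coe, zzCSig, Finset.mem_filter] at this
        exact this.2.1
      refine ⟨⟨zzVrep p, C.vrep_isZD hptop⟩, ?_, ?_⟩
      · rw [hWc]
        constructor
        · show zzPat (zzVrep p) ∈ _
          rw [C.pat_vrep]
          exact hp
        · show zzVrep p = zzVrep (zzPat (zzVrep p))
          rw [C.pat_vrep]
      · exact C.pat_vrep p
  rw [← Set.ncard_image_of_injOn hinj, himg, Set.ncard_coe_finset]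

lemma ncard_W :
    (zzW (B := B) (Z := Z)).ncard + (zzCSig m n).card =
      Nat.card {x : (∀ i, B i) × (∀ j, Z j) // IsZD x} := by
  haveI : ∀ i, Finite (B i) := fun i => Finite.of_equiv BB (C.e i).toEquiv.symm
  rw [← C.ncard_Wc]
  exact Set.ncard_add_ncard_compl _ (Set.toFinite _) (Set.toFinite _)

lemma card_V :
    Nat.card {x : (∀ i, B i) × (∀ j, Z j) // IsZD x} + 1 =
      Nat.card ((∀ i, B i) × (∀ j, Z j)) := by
  classical
  haveI : ∀ i, Finite (B i) := fun i => Finite.of_equiv BB (C.e i).toEquiv.symm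
  letI : Fintype ((∀ i, B i) × (∀ j, Z j)) := Fintype.ofFinite _
  have h1 : Nat.card {x : (∀ i, B i) × (∀ j, Z j) // IsZD x} =
      Nat.card {x : (∀ i, B i) × (∀ j, Z j) // ¬ (x = 1)} :=
    Nat.card_congr (Equiv.subtypeEquivRight fun x => C.isZD_iff x)
  rw [h1, Nat.card_eq_fintype_card, Nat.card_eq_fintype_card]
  rw [Fintype.card_subtype_compl]
  rw [Fintype.card_subtype_eq (1 : (∀ i, B i) × (∀ j, Z j))]
  have := Fintype.card_pos (α := (∀ i, B i) × (∀ j, Z j))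
  have hle : 1 ≤ Fintype.card ((∀ i, B i) × (∀ j, Z j)) := this
  omega

lemma main_eq :
    metricDim (gamma1 ((∀ i, B i) × (∀ j, Z j))) + 2 ^ (m + n) =
      Nat.card {x : (∀ i, B i) × (∀ j, Z j) // IsZD x} + m + 1 := by
  classical
  haveI : ∀ i, Finite (B i) := fun i => Finite.of_equiv BB (C.e i).toEquiv.symm
  have hmem : (zzW (B := B) (Z := Z)).ncard ∈
      {k | ∃ W : Set {x : (∀ i, B i) × (∀ j, Z j) // IsZD x},
        W.Finite ∧ W.ncard = k ∧ IsResolving (gamma1 ((∀ i, B i) × (∀ j, Z j))) W} :=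
    ⟨zzW, Set.toFinite _, rfl, C.resolving_W⟩
  have hupper : metricDim (gamma1 ((∀ i, B i) × (∀ j, Z j))) ≤ (zzW (B := B) (Z := Z)).ncard :=
    Nat.sInf_le hmem
  obtain ⟨W0, hW0fin, hW0card, hW0res⟩ := Nat.sInf_mem (⟨_, hmem⟩ : Set.Nonempty _)
  have hlower := C.lower_bound hW0res
  rw [hW0card] at hlower
  have h1 := C.ncard_W
  have h2 := card_zzCSig (m := m) (n := n)
  have hlower2 : Nat.card {x : (∀ i, B i) × (∀ j, Z j) // IsZD x} + m + 1 ≤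
      metricDim (gamma1 ((∀ i, B i) × (∀ j, Z j))) + 2 ^ (m + n) := hlower
  omega

end zzCtx

end ZZfinal

theorem stmt15 (m n : ℕ) (hm : 1 ≤ m) (hn : 1 ≤ n)
    {B : Fin m → Type*} [∀ i, CommSemiring (B i)]
    (hB : ∀ i, Nonempty (B i ≃+* BB))
    {Z : Fin n → Type*} [∀ j, CommSemiring (Z j)] [∀ j, Fintype (Z j)]
    (antiZ : ∀ j, ∀ a b : Z j, a + b = 0 → a = 0 ∧ b = 0)
    (closedZ : ∀ j, ∀ a b : Z j, IsZD a → IsZD b → IsZD (a + b))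
    (hcardZ : ∀ j, 3 ≤ Nat.card (Z j))
    (hnzZ : ∀ j, Set.ncard {x : Z j | ¬ IsZD x} = 1) :
    (metricDim (gamma1 ((∀ i, B i) × (∀ j, Z j))) : ℤ) =
        (Nat.card ((∀ i, B i) × (∀ j, Z j)) : ℤ) + m - 2 ^ (m + n) ∧
      (metricDim (gamma1 ((∀ i, B i) × (∀ j, Z j))) : ℤ) =
        (Nat.card {x : (∀ i, B i) × (∀ j, Z j) // IsZD x} : ℤ) - 2 ^ (m + n) + m + 1 := by
  classical
  have hzdZ : ∀ j, ∀ x : Z j, x ≠ 1 → IsZD x := by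
    intro j x hx
    obtain ⟨a, ha⟩ := Set.ncard_eq_one.mp (hnzZ j)
    have h1 : (1 : Z j) ∈ {x : Z j | ¬ IsZD x} := zz_not_isZD_one
    rw [ha] at h1
    by_contra hc
    have hx' : x ∈ {x : Z j | ¬ IsZD x} := hc
    rw [ha] at hx'
    exact hx (hx'.trans h1.symm)
  have hntZ : ∀ j, (1 : Z j) ≠ 0 := by
    intro j
    have h3 : 3 ≤ Fintype.card (Z j) := by
      rw [← Nat.card_eq_fintype_card]; exact hcardZ j
    haveI : Nontrivial (Z j) := Fintype.one_lt_card_iff_nontrivial.mp (by omega)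
    exact one_ne_zero
  have htwoZ : ∀ j, ∃ a b : Z j, a ≠ b ∧ a ≠ 1 ∧ b ≠ 1 := by
    intro j
    have h3 : 3 ≤ Fintype.card (Z j) := by
      rw [← Nat.card_eq_fintype_card]; exact hcardZ j
    have hcard : 1 < (Finset.univ.erase (1 : Z j)).card := by
      rw [Finset.card_erase_of_mem (Finset.mem_univ _), Finset.card_univ]
      omega
    obtain ⟨a, ha, b, hb, hab⟩ := Finset.one_lt_card.mp hcard
    exact ⟨a, b, hab, (Finset.mem_erase.mp ha).1, (Finset.mem_erase.mp hb).1⟩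
  set C : zzCtx m n B Z :=
    { hm := hm, hn := hn, e := fun i => (hB i).some, antiZ := antiZ, closedZ := closedZ,
      htwoZ := htwoZ, hzdZ := hzdZ, hntZ := hntZ } with hC
  have key := C.main_eq
  have hcv := C.card_V
  have hPP : ((2 : ℤ)) ^ (m + n) = ((2 ^ (m + n) : ℕ) : ℤ) := by push_cast; ring
  constructor
  · rw [hPP]
    omega
  · rw [hPP]
    omega
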